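/- Pick any real a > 0 and any nonnegative integer k, and let f(x) = (x + a)·sin x for x ∈ ℝ. Then there exist a real number M_k with (2k + 1/2)π < M_k < (2k + 1)π and a continuous map α : [2kπ, M_k] → [M_k, (2k+1)π] such that α(2kπ) = (2k+1)π, α(M_k) = M_k, and f(α(x)) = f(x) for all x ∈ [2kπ, M_k]. -/

import Mathlib

open Real

/-- For `f(x) = (x + a) sin x` with `a > 0` and a nonnegative integer `k`, there exist
`M_k ∈ ((2k + 1/2)π, (2k+1)π)` and a continuous map `α : [2kπ, M_k] → [M_k, (2k+1)π]` with
`α(2kπ) = (2k+1)π`, `α(M_k) = M_k`, and `f(α(x)) = f(x)` on `[2kπ, M_k]`. -/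
theorem matching_branch_for_x_add_a_mul_sin
    (a : ℝ) (ha : 0 < a) (k : ℕ) :
    ∃ M : ℝ, (2 * (k : ℝ) + 1 / 2) * π < M ∧ M < (2 * (k : ℝ) + 1) * π ∧
      ∃ α : ℝ → ℝ,
        ContinuousOn α (Set.Icc (2 * (k : ℝ) * π) M) ∧
        Set.MapsTo α (Set.Icc (2 * (k : ℝ) * π) M) (Set.Icc M ((2 * (k : ℝ) + 1) * π)) ∧
        α (2 * (k : ℝ) * π) = (2 * (k : ℝ) + 1) * π ∧
        α M = M ∧
        ∀ x ∈ Set.Icc (2 * (k : ℝ) * π) M,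
          (α x + a) * Real.sin (α x) = (x + a) * Real.sin x := by
  have hπ : (0:ℝ) < π := Real.pi_pos
  set b : ℝ := 2 * (k : ℝ) * π with hbdef
  have hb0 : 0 ≤ b := by positivity
  have hbk : b = (k : ℝ) * (2 * π) := by ring
  -- shift lemmas
  have hsin : ∀ y : ℝ, Real.sin (y + b) = Real.sin y := by
    intro y
    rw [hbk]
    exact_mod_cast Real.sin_add_int_mul_two_pi y (k : ℤ)
  have hcos : ∀ y : ℝ, Real.cos (y + b) = Real.cos y := by
    intro y
    rw [hbk]
    exact_mod_cast Real.cos_add_int_mul_two_pi y (k : ℤ)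
  have hmid : (2 * (k : ℝ) + 1 / 2) * π = b + π / 2 := by ring
  have hcend : (2 * (k : ℝ) + 1) * π = b + π := by ring
  set c : ℝ := b + π with hcdef
  set f : ℝ → ℝ := fun x => (x + a) * Real.sin x with hfdef
  set g : ℝ → ℝ := fun x => Real.sin x + (x + a) * Real.cos x with hgdef
  have hfc : Continuous f := (continuous_id.add continuous_const).mul Real.continuous_sin
  have hgc : Continuous g :=
    Real.continuous_sin.add ((continuous_id.add continuous_const).mul Real.continuous_cos)
  have hfd : ∀ x : ℝ, HasDerivAt f (g x) x := by
    intro x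
    have h1 : HasDerivAt (fun x : ℝ => x + a) 1 x := (hasDerivAt_id x).add_const a
    have := h1.mul (Real.hasDerivAt_sin x)
    exact this.congr_deriv (by ring)
  have hgd : ∀ x : ℝ, HasDerivAt g (2 * Real.cos x - (x + a) * Real.sin x) x := by
    intro x
    have h1 : HasDerivAt (fun x : ℝ => x + a) 1 x := (hasDerivAt_id x).add_const a
    have h2 := h1.mul (Real.hasDerivAt_cos x)
    have := (Real.hasDerivAt_sin x).add h2
    exact this.congr_deriv (by ring)
  have hfderiv : deriv f = g := funext fun x => (hfd x).deriv
  have hgderiv : ∀ x, deriv g x = 2 * Real.cos x - (x + a) * Real.sin x :=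
    fun x => (hgd x).deriv
  -- sign facts on the shifted interval
  have hsinpos : ∀ x : ℝ, b < x → x < c → 0 < Real.sin x := by
    intro x h1 h2
    have : Real.sin x = Real.sin (x - b) := by rw [← hsin (x - b)]; ring_nf
    rw [this]
    exact Real.sin_pos_of_pos_of_lt_pi (by linarith) (by simp only [hcdef] at h2; linarith)
  have hcosneg : ∀ x : ℝ, b + π / 2 < x → x < c → Real.cos x < 0 := by
    intro x h1 h2
    have : Real.cos x = Real.cos (x - b) := by rw [← hcos (x - b)]; ring_nf
    rw [this]
    exact Real.cos_neg_of_pi_div_two_lt_of_lt (by linarith)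
      (by simp only [hcdef] at h2; linarith)
  have hcosnn : ∀ x : ℝ, b ≤ x → x ≤ b + π / 2 → 0 ≤ Real.cos x := by
    intro x h1 h2
    have : Real.cos x = Real.cos (x - b) := by rw [← hcos (x - b)]; ring_nf
    rw [this]
    exact Real.cos_nonneg_of_neg_pi_div_two_le_of_le (by linarith) (by linarith)
  have hxa : ∀ x : ℝ, b ≤ x → 0 < x + a := fun x hx => by linarith
  -- g strictly decreasing on [b+π/2, c]
  have hganti : StrictAntiOn g (Set.Icc (b + π / 2) c) := by
    apply strictAntiOn_of_deriv_neg (convex_Icc _ _) hgc.continuousOn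
    intro x hx
    rw [interior_Icc] at hx
    rw [hgderiv]
    have h1 := hcosneg x hx.1 hx.2
    have h2 := hsinpos x (by linarith [hx.1]) hx.2
    have h3 := hxa x (by linarith [hx.1])
    nlinarith
  -- values of g at endpoints
  have hsinb : Real.sin b = 0 := by simpa using hsin 0
  have hcosb : Real.cos b = 1 := by simpa using hcos 0
  have hsinc : Real.sin c = 0 := by
    rw [hcdef, add_comm b π, hsin π, Real.sin_pi]
  have hcosc : Real.cos c = -1 := by
    rw [hcdef, add_comm b π, hcos π, Real.cos_pi]
  have hg1 : g (b + π / 2) = 1 := by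
    have hs : Real.sin (b + π / 2) = 1 := by
      rw [add_comm b (π/2), hsin (π/2), Real.sin_pi_div_two]
    have hc : Real.cos (b + π / 2) = 0 := by
      rw [add_comm b (π/2), hcos (π/2), Real.cos_pi_div_two]
    simp [hgdef, hs, hc]
  have hg2 : g c = -(c + a) := by simp [hgdef, hsinc, hcosc]
  have hg2neg : g c < 0 := by
    rw [hg2]; have := hxa c (by simp [hcdef]; linarith); linarith
  -- find M with g M = 0
  have hivt : (0:ℝ) ∈ g '' Set.Icc (b + π / 2) c := by
    apply intermediate_value_Icc' (by linarith) hgc.continuousOn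
    exact ⟨le_of_lt hg2neg, by rw [hg1]; norm_num⟩
  obtain ⟨M, hMmem, hgM⟩ := hivt
  have hM1 : b + π / 2 < M := by
    rcases eq_or_lt_of_le hMmem.1 with h | h
    · exfalso; rw [← h] at hgM; rw [hg1] at hgM; norm_num at hgM
    · exact h
  have hM2 : M < c := by
    rcases eq_or_lt_of_le hMmem.2 with h | h
    · exfalso; rw [h] at hgM; linarith
    · exact h
  have hbM : b < M := by linarith
  -- f strictly monotone on [b, M]
  have hfmono : StrictMonoOn f (Set.Icc b M) := by
    apply strictMonoOn_of_deriv_pos (convex_Icc _ _) hfc.continuousOn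
    intro x hx
    rw [interior_Icc] at hx
    rw [hfderiv]
    rcases le_or_gt x (b + π / 2) with h | h
    · have h1 := hsinpos x hx.1 (by linarith [hx.2, hM2])
      have h2 := hcosnn x (le_of_lt hx.1) h
      have h3 := hxa x (le_of_lt hx.1)
      simp only [hgdef]
      nlinarith
    · have := hganti ⟨le_of_lt h, by linarith [hx.2, hM2]⟩ ⟨le_of_lt hM1, le_of_lt hM2⟩ hx.2
      rw [hgM] at this
      linarith
  -- f strictly antitone on [M, c]
  have hfanti : StrictAntiOn f (Set.Icc M c) := by
    apply strictAntiOn_of_deriv_neg (convex_Icc _ _) hfc.continuousOn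
    intro x hx
    rw [interior_Icc] at hx
    rw [hfderiv]
    have := hganti ⟨le_of_lt hM1, le_of_lt hM2⟩ ⟨by linarith [hx.1], le_of_lt hx.2⟩ hx.1
    rw [hgM] at this
    linarith
  have hfb : f b = 0 := by simp [hfdef, hsinb]
  have hfcv : f c = 0 := by simp [hfdef, hsinc]
  have hfM : 0 < f M := by
    have := hfmono (Set.left_mem_Icc.2 (le_of_lt hbM)) ⟨le_of_lt hbM, le_refl M⟩ hbM
    rwa [hfb] at this
  -- f maps [M, c] into [0, f M]
  have hmapsST : Set.MapsTo f (Set.Icc M c) (Set.Icc 0 (f M)) := by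
    intro x hx
    constructor
    · rcases eq_or_lt_of_le hx.2 with h | h
      · rw [h, hfcv]
      · have := hfanti hx (Set.right_mem_Icc.2 (by linarith [hM2])) h
        rw [hfcv] at this; linarith
    · rcases eq_or_lt_of_le hx.1 with h | h
      · rw [← h]
      · have := hfanti (Set.left_mem_Icc.2 (by linarith [hM2])) hx h
        linarith
  -- f maps [b, M] into [0, f M]
  have hmapsL : ∀ x ∈ Set.Icc b M, f x ∈ Set.Icc 0 (f M) := by
    intro x hx
    constructor
    · rcases eq_or_lt_of_le hx.1 with h | h
      · rw [← h, hfb]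
      · have := hfmono (Set.left_mem_Icc.2 (le_of_lt hbM)) hx h
        rw [hfb] at this; linarith
    · rcases eq_or_lt_of_le hx.2 with h | h
      · rw [h]
      · have := hfmono hx (Set.right_mem_Icc.2 (le_of_lt hbM)) h
        linarith
  -- build the homeomorphism
  let e : Set.Icc M c → Set.Icc (0:ℝ) (f M) := fun x => ⟨f x.1, hmapsST x.2⟩
  have hecont : Continuous e := (hfc.comp continuous_subtype_val).subtype_mk _
  have hebij : Function.Bijective e := by
    constructor
    · intro x y hxy
      have : f x.1 = f y.1 := congrArg Subtype.val hxy
      exact Subtype.ext (hfanti.injOn x.2 y.2 this)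
    · intro t
      have : t.1 ∈ f '' Set.Icc M c := by
        apply intermediate_value_Icc' (by linarith [hM2]) hfc.continuousOn
        rw [hfcv]
        exact t.2
      obtain ⟨x, hx, hfx⟩ := this
      exact ⟨⟨x, hx⟩, Subtype.ext hfx⟩
  let E : Set.Icc M c ≃ Set.Icc (0:ℝ) (f M) := Equiv.ofBijective e hebij
  have hEcont : Continuous E := hecont
  let H := Continuous.homeoOfEquivCompactToT2 (f := E) hEcont
  have hfMnn : (0:ℝ) ≤ f M := le_of_lt hfM
  let α : ℝ → ℝ := fun x => (H.symm (Set.projIcc 0 (f M) hfMnn (f x)) : ℝ)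
  have hαcont : Continuous α :=
    continuous_subtype_val.comp (H.symm.continuous.comp (continuous_projIcc.comp hfc))
  have hkey : ∀ t : Set.Icc (0:ℝ) (f M), f ((H.symm t : Set.Icc M c) : ℝ) = t.1 := by
    intro t
    have : E (H.symm t) = t := Equiv.apply_symm_apply E t
    exact congrArg Subtype.val this
  have hαval : ∀ x ∈ Set.Icc b M, f (α x) = f x := by
    intro x hx
    have hmem := hmapsL x hx
    simp only [α, Set.projIcc_of_mem hfMnn hmem]
    exact hkey _
  have hsymm : ∀ (t : Set.Icc (0:ℝ) (f M)) (s : Set.Icc M c), E s = t → H.symm t = s := by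
    intro t s h
    rw [← h]
    exact Equiv.symm_apply_apply E s
  refine ⟨M, by rw [hmid]; exact hM1, by rw [hcend]; exact hM2, α, hαcont.continuousOn, ?_, ?_, ?_, ?_⟩
  · intro x hx
    rw [hcend]
    exact (H.symm _).2
  · -- α b = c
    have hmem : f b ∈ Set.Icc (0:ℝ) (f M) := hmapsL b (Set.left_mem_Icc.2 (le_of_lt hbM))
    have hc' : (c : ℝ) ∈ Set.Icc M c := Set.right_mem_Icc.2 (le_of_lt hM2)
    have : H.symm (Set.projIcc 0 (f M) hfMnn (f b)) = ⟨c, hc'⟩ := by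
      rw [Set.projIcc_of_mem hfMnn hmem]
      apply hsymm
      exact Subtype.ext (by simp [e, E, Equiv.ofBijective, hfcv, hfb])
    show ((H.symm (Set.projIcc 0 (f M) hfMnn (f b)) : Set.Icc M c) : ℝ) = (2 * (k:ℝ) + 1) * π
    rw [this, hcend]
  · -- α M = M
    have hmem : f M ∈ Set.Icc (0:ℝ) (f M) := Set.right_mem_Icc.2 hfMnn
    have hM' : M ∈ Set.Icc M c := Set.left_mem_Icc.2 (le_of_lt hM2)
    have : H.symm (Set.projIcc 0 (f M) hfMnn (f M)) = ⟨M, hM'⟩ := by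
      rw [Set.projIcc_of_mem hfMnn hmem]
      apply hsymm
      rfl
    show ((H.symm (Set.projIcc 0 (f M) hfMnn (f M)) : Set.Icc M c) : ℝ) = M
    rw [this]
  · intro x hx
    exact hαval x hx
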